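/- The real line ℝ with the co-countable topology (open sets are ∅ and complements of countable sets) is not c-well-filtered; in fact, every subset of ℝ is a saturated Lindelöf set in this topology, and the family {ℝ \ C : C countable} is a countably filtered family of saturated Lindelöf sets with empty intersection but no member equal to ∅. -/
import Mathlib


universe u

/-- A set is saturated if it equals the intersection of its open neighbourhoods. -/
def IsSaturatedSet {X : Type u} [TopologicalSpace X] (A : Set X) : Prop :=
  A = ⋂₀ {U : Set X | IsOpen U ∧ A ⊆ U}

/-- A family of sets is countably filtered (under `⊆`) if every countable subfamily
has a lower bound in the family. -/
def CntFilteredFam {X : Type u} (S : Set (Set X)) : Prop :=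
  ∀ T ⊆ S, T.Countable → ∃ L ∈ S, ∀ t ∈ T, L ⊆ t

/-- A family of sets is countably directed (under `⊆`) if every countable subfamily
has an upper bound in the family. -/
def CntDirectedFam {X : Type u} (S : Set (Set X)) : Prop :=
  ∀ T ⊆ S, T.Countable → ∃ U ∈ S, ∀ t ∈ T, t ⊆ U

/-- A space is c-well-filtered if for every countably filtered family of saturated
Lindelöf subsets whose intersection is contained in an open `U`, some member is contained in `U`. -/
def CWellFiltered (X : Type u) [TopologicalSpace X] : Prop :=
  ∀ S : Set (Set X), (∀ K ∈ S, IsSaturatedSet K ∧ IsLindelof K) →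
    CntFilteredFam S → ∀ U : Set X, IsOpen U → ⋂₀ S ⊆ U → ∃ K ∈ S, K ⊆ U

/-- The co-countable topology on `ℝ`: open sets are `∅` and the cocountable sets. -/
def cocountableTopology : TopologicalSpace ℝ where
  IsOpen U := U = ∅ ∨ Uᶜ.Countable
  isOpen_univ := Or.inr (by simp)
  isOpen_inter := by
    rintro s t (rfl | hs) ht
    · exact Or.inl (Set.empty_inter t)
    · rcases ht with rfl | ht
      · exact Or.inl (Set.inter_empty s)
      · exact Or.inr (by rw [Set.compl_inter]; exact hs.union ht)
  isOpen_sUnion := by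
    intro S hS
    by_cases h : ∃ s ∈ S, s ≠ ∅
    · obtain ⟨s, hsS, hs⟩ := h
      rcases hS s hsS with rfl | hc
      · exact absurd rfl hs
      · exact Or.inr (Set.Countable.mono
          (Set.compl_subset_compl.2 (Set.subset_sUnion_of_mem hsS)) hc)
    · push_neg at h
      exact Or.inl (Set.sUnion_eq_empty.2 h)

/-- in the co-countable topology on `ℝ`, every subset is a saturated
Lindelöf set, the family of cocountable sets is countably filtered with empty
intersection yet no empty member, and the space is not c-well-filtered. -/

lemma coc_open_iff (U : Set ℝ) : @IsOpen ℝ cocountableTopology U ↔ (U = ∅ ∨ Uᶜ.Countable) :=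
  Iff.rfl

lemma coc_saturated (A : Set ℝ) : @IsSaturatedSet ℝ cocountableTopology A := by
  apply Set.Subset.antisymm (Set.subset_sInter fun U hU => hU.2)
  intro x hx
  by_contra hxA
  have hmem : ({x}ᶜ : Set ℝ) ∈ {U : Set ℝ | @IsOpen ℝ cocountableTopology U ∧ A ⊆ U} := by
    refine ⟨Or.inr ?_, fun y hy => fun h => hxA (h ▸ hy)⟩
    rw [compl_compl]; exact Set.countable_singleton x
  exact (hx _ hmem) rfl

lemma coc_lindelof (A : Set ℝ) : @IsLindelof ℝ cocountableTopology A := by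
  letI : TopologicalSpace ℝ := cocountableTopology
  apply isLindelof_of_countable_subcover
  intro ι U hUo hsU
  rcases Set.eq_empty_or_nonempty A with rfl | ⟨a, ha⟩
  · exact ⟨∅, Set.countable_empty, by simp⟩
  · obtain ⟨i₀, hi₀⟩ := Set.mem_iUnion.1 (hsU ha)
    have hUc : (U i₀)ᶜ.Countable := by
      rcases hUo i₀ with h | h
      · exact absurd (h ▸ hi₀) (Set.notMem_empty a)
      · exact h
    have key : ∀ x ∈ (U i₀)ᶜ ∩ A, ∃ i, x ∈ U i := fun x hx => Set.mem_iUnion.1 (hsU hx.2)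
    choose f hf using key
    classical
    let g : ℝ → ι := fun x => if h : x ∈ (U i₀)ᶜ ∩ A then f x h else i₀
    refine ⟨insert i₀ (g '' ((U i₀)ᶜ ∩ A)),
      (((hUc.mono Set.inter_subset_left).image g).insert _), ?_⟩
    intro x hxA
    by_cases hx : x ∈ U i₀
    · exact Set.mem_biUnion (Set.mem_insert _ _) hx
    · have hxD : x ∈ (U i₀)ᶜ ∩ A := ⟨hx, hxA⟩
      refine Set.mem_biUnion (Set.mem_insert_of_mem _ ⟨x, hxD, rfl⟩) ?_
      simpa only [g, dif_pos hxD] using hf x hxD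

theorem stmt6 :
    (∀ A : Set ℝ, @IsSaturatedSet ℝ cocountableTopology A ∧ @IsLindelof ℝ cocountableTopology A) ∧
    CntFilteredFam {U : Set ℝ | ∃ C : Set ℝ, C.Countable ∧ U = Cᶜ} ∧
    ⋂₀ {U : Set ℝ | ∃ C : Set ℝ, C.Countable ∧ U = Cᶜ} = ∅ ∧
    (∀ K ∈ {U : Set ℝ | ∃ C : Set ℝ, C.Countable ∧ U = Cᶜ}, K ≠ (∅ : Set ℝ)) ∧
    ¬ @CWellFiltered ℝ cocountableTopology := by
  have hall : ∀ A : Set ℝ, @IsSaturatedSet ℝ cocountableTopology A ∧ @IsLindelof ℝ cocountableTopology A :=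
    fun A => ⟨coc_saturated A, coc_lindelof A⟩
  have hfil : CntFilteredFam {U : Set ℝ | ∃ C : Set ℝ, C.Countable ∧ U = Cᶜ} := by
    intro T hT hTc
    have hch : ∀ t ∈ T, ∃ C : Set ℝ, C.Countable ∧ t = Cᶜ := fun t ht => hT ht
    choose g hg1 hg2 using hch
    refine ⟨(⋃ (t : T), g t.1 t.2)ᶜ, ⟨_, ?_, rfl⟩, ?_⟩
    · haveI := hTc.to_subtype
      exact Set.countable_iUnion (fun t => hg1 t.1 t.2)
    · intro t ht x hx
      rw [hg2 t ht]
      exact fun hxC => hx (Set.mem_iUnion.2 ⟨⟨t, ht⟩, hxC⟩)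
  have hinter : ⋂₀ {U : Set ℝ | ∃ C : Set ℝ, C.Countable ∧ U = Cᶜ} = ∅ := by
    ext x
    simp only [Set.mem_sInter, Set.mem_empty_iff_false, iff_false]
    intro h
    exact (h {x}ᶜ ⟨{x}, Set.countable_singleton x, rfl⟩) rfl
  have hne : ∀ K ∈ {U : Set ℝ | ∃ C : Set ℝ, C.Countable ∧ U = Cᶜ}, K ≠ (∅ : Set ℝ) := by
    rintro K ⟨C, hC, rfl⟩ h
    have : (Set.univ : Set ℝ).Countable := by
      have : (Cᶜ)ᶜ.Countable := by rw [compl_compl]; exact hC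
      simpa [h] using (Set.countable_empty.union this)
    exact Cardinal.not_countable_real this
  refine ⟨hall, hfil, hinter, hne, ?_⟩
  intro hwf
  obtain ⟨K, hK, hKsub⟩ := hwf {U : Set ℝ | ∃ C : Set ℝ, C.Countable ∧ U = Cᶜ}
    (fun K _ => hall K) hfil ∅ (Or.inl rfl) (hinter ▸ Set.Subset.refl _)
  exact hne K hK (Set.subset_empty_iff.1 hKsub)
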